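/- The two explicit real 7×7 matrices X_l and X_r given by X_l = [[1,1,0,0,0,0,0],[1,2,0,1,0,0,0],[0,0,1,0,1,0,0],[0,1,0,2,0,1,0],[0,0,1,0,3,1,1],[0,0,0,1,1,2,0],[0,0,0,0,1,0,1]] and X_r = [[1,1,0,0,0,0,0],[1,3,0,1,0,1,0],[0,0,2,0,1,0,1],[0,1,0,1,0,0,0],[0,0,1,0,2,1,0],[0,1,0,0,1,2,0],[0,0,1,0,0,0,1]] have the same characteristic polynomial; in particular they have the same eigenvalues with multiplicity. -/
import Mathlib


open Matrix

/-- The permutation of triangle labels relating the two auxiliary matrices. -/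
def permE : Fin 7 ≃ Fin 7 where
  toFun := ![6, 2, 0, 4, 1, 5, 3]
  invFun := ![2, 4, 1, 6, 3, 5, 0]
  left_inv := by decide
  right_inv := by decide

/-- The auxiliary matrices `X_l` and `X_r` of the two equispectral discretized
volumes of seven triangles have the same characteristic polynomial; in
particular they have the same eigenvalues with multiplicity. -/
theorem stmt_13 :
    (!![1,1,0,0,0,0,0;
        1,2,0,1,0,0,0;
        0,0,1,0,1,0,0;
        0,1,0,2,0,1,0;
        0,0,1,0,3,1,1;
        0,0,0,1,1,2,0;
        0,0,0,0,1,0,1] : Matrix (Fin 7) (Fin 7) ℝ).charpoly =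
    (!![1,1,0,0,0,0,0;
        1,3,0,1,0,1,0;
        0,0,2,0,1,0,1;
        0,1,0,1,0,0,0;
        0,0,1,0,2,1,0;
        0,1,0,0,1,2,0;
        0,0,1,0,0,0,1] : Matrix (Fin 7) (Fin 7) ℝ).charpoly := by
  have h : (!![1,1,0,0,0,0,0;
        1,3,0,1,0,1,0;
        0,0,2,0,1,0,1;
        0,1,0,1,0,0,0;
        0,0,1,0,2,1,0;
        0,1,0,0,1,2,0;
        0,0,1,0,0,0,1] : Matrix (Fin 7) (Fin 7) ℝ) =
      reindex permE permE (!![1,1,0,0,0,0,0;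
        1,2,0,1,0,0,0;
        0,0,1,0,1,0,0;
        0,1,0,2,0,1,0;
        0,0,1,0,3,1,1;
        0,0,0,1,1,2,0;
        0,0,0,0,1,0,1] : Matrix (Fin 7) (Fin 7) ℝ) := by
    rw [← Matrix.etaExpand_eq (reindex permE permE _)]
    rfl
  rw [h, Matrix.charpoly_reindex]
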